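/- arXiv:1611.05258 — 2 statements merged into one kernel-verified Lean document; each statement's English description precedes it below -/
import Mathlib

section
/- For all positive integers M and ν, Σ_{k=1}^{M^ν} d_{ν,M}(k)² ≤ M^ν · ( e·(log M)/ν + e )^{ν²}. -/
open Finset

/-- `d_{ν,M}(k)`: the number of `ν`-tuples `(m_1, …, m_ν)` with `1 ≤ m_i ≤ M` and
`m_1 ⋯ m_ν = k`. -/
noncomputable def multDiv (ν M k : ℕ) : ℕ :=
  Nat.card {f : Fin ν → ℕ // (∀ i, 1 ≤ f i ∧ f i ≤ M) ∧ ∏ i, f i = k}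

lemma split_factorization {ι : Type*} [DecidableEq ι] (s : Finset ι) :
    ∀ (a b : ℕ) (c : ι → ℕ), (∀ j ∈ s, 0 < c j) → a * b = ∏ j ∈ s, c j →
    ∃ u v : ι → ℕ, (∀ j ∈ s, u j * v j = c j) ∧ (∏ j ∈ s, u j = a) ∧ (∏ j ∈ s, v j = b) := by
  classical
  induction s using Finset.induction_on with
  | empty =>
    intro a b c _ h
    simp only [Finset.prod_empty] at h ⊢
    have ha : a = 1 := Nat.dvd_one.mp ⟨b, h.symm⟩
    have hb : b = 1 := Nat.dvd_one.mp ⟨a, by rw [Nat.mul_comm] at h; exact h.symm⟩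
    exact ⟨fun _ => 1, fun _ => 1, by simp, ha.symm, hb.symm⟩
  | @insert j₀ s hj ih =>
    intro a b c hc h
    rw [Finset.prod_insert hj] at h
    have hcj : 0 < c j₀ := hc j₀ (Finset.mem_insert_self _ _)
    have hP : 0 < ∏ j ∈ s, c j :=
      Finset.prod_pos fun j hjs => hc j (Finset.mem_insert_of_mem hjs)
    have ha : 0 < a := by
      rcases Nat.eq_zero_or_pos a with rfl | ha
      · simp at h; omega
      · exact ha
    set d := Nat.gcd a (c j₀) with hd_def
    have hd : 0 < d := Nat.gcd_pos_of_pos_left _ ha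
    have hda : d ∣ a := Nat.gcd_dvd_left _ _
    have hdc : d ∣ c j₀ := Nat.gcd_dvd_right _ _
    set v₀ := c j₀ / d with hv₀_def
    have hv₀ : d * v₀ = c j₀ := Nat.mul_div_cancel' hdc
    have hv₀pos : 0 < v₀ := Nat.div_pos (Nat.le_of_dvd hcj hdc) hd
    have cop : Nat.Coprime v₀ (a / d) := (Nat.coprime_div_gcd_div_gcd hd).symm
    have hcab : c j₀ ∣ a * b := h ▸ Dvd.intro _ rfl
    have hv₀ab : v₀ ∣ (a / d) * b := by
      have h2 : d * v₀ ∣ d * ((a / d) * b) := by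
        rw [hv₀, ← Nat.mul_assoc, Nat.mul_div_cancel' hda]; exact hcab
      exact (Nat.mul_dvd_mul_iff_left hd).mp h2
    have hv₀b : v₀ ∣ b := cop.dvd_of_dvd_mul_left hv₀ab
    have heq : (a / d) * (b / v₀) = ∏ j ∈ s, c j := by
      have key : (d * v₀) * ((a / d) * (b / v₀)) = (d * v₀) * ∏ j ∈ s, c j := by
        calc (d * v₀) * ((a / d) * (b / v₀)) = (d * (a / d)) * (v₀ * (b / v₀)) := by ring
        _ = a * b := by rw [Nat.mul_div_cancel' hda, Nat.mul_div_cancel' hv₀b]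
        _ = c j₀ * ∏ j ∈ s, c j := h
        _ = (d * v₀) * ∏ j ∈ s, c j := by rw [hv₀]
      exact Nat.eq_of_mul_eq_mul_left (Nat.mul_pos hd hv₀pos) key
    obtain ⟨u, v, hw, hu, hv⟩ :=
      ih (a / d) (b / v₀) c (fun j hjs => hc j (Finset.mem_insert_of_mem hjs)) heq
    have hUu : ∏ x ∈ s, Function.update u j₀ d x = ∏ x ∈ s, u x :=
      Finset.prod_congr rfl fun j hjs => Function.update_of_ne (ne_of_mem_of_not_mem hjs hj) _ _
    have hVv : ∏ x ∈ s, Function.update v j₀ v₀ x = ∏ x ∈ s, v x :=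
      Finset.prod_congr rfl fun j hjs => Function.update_of_ne (ne_of_mem_of_not_mem hjs hj) _ _
    refine ⟨Function.update u j₀ d, Function.update v j₀ v₀, ?_, ?_, ?_⟩
    · intro j hjmem
      rcases Finset.mem_insert.mp hjmem with rfl | hjs
      · simp [hv₀]
      · rw [Function.update_of_ne (ne_of_mem_of_not_mem hjs hj),
          Function.update_of_ne (ne_of_mem_of_not_mem hjs hj)]
        exact hw j hjs
    · rw [Finset.prod_insert hj, Function.update_self, hUu, hu, Nat.mul_div_cancel' hda]
    · rw [Finset.prod_insert hj, Function.update_self, hVv, hv, Nat.mul_div_cancel' hv₀b]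

lemma exists_matrix {ι : Type*} [Fintype ι] [DecidableEq ι] :
    ∀ (k : ℕ) (f : Fin k → ℕ) (g : ι → ℕ), (∀ i, 0 < f i) → (∀ j, 0 < g j) →
    (∏ i, f i) = (∏ j, g j) →
    ∃ b : Fin k → ι → ℕ, (∀ i j, 0 < b i j) ∧ (∀ i, ∏ j, b i j = f i) ∧
      (∀ j, ∏ i, b i j = g j) := by
  intro k
  induction k with
  | zero =>
    intro f g _ hg h
    simp only [Finset.univ_eq_empty, Finset.prod_empty] at h
    refine ⟨Fin.elim0, fun i => i.elim0, fun i => i.elim0, fun j => ?_⟩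
    have hdvd : g j ∣ (1 : ℕ) := h ▸ Finset.dvd_prod_of_mem g (Finset.mem_univ j)
    simp [Nat.dvd_one.mp hdvd]
  | succ k ih =>
    intro f g hf hg h
    rw [Fin.prod_univ_succ] at h
    obtain ⟨u, v, hw, hu, hv⟩ :=
      split_factorization Finset.univ (f 0) (∏ i : Fin k, f i.succ) g (fun j _ => hg j) h
    have hvpos : ∀ j, 0 < v j := fun j => by
      have h1 := hw j (Finset.mem_univ j); have h2 := hg j
      rcases Nat.eq_zero_or_pos (v j) with h0 | h0
      · rw [h0, Nat.mul_zero] at h1; omega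
      · exact h0
    have hupos : ∀ j, 0 < u j := fun j => by
      have h1 := hw j (Finset.mem_univ j); have h2 := hg j
      rcases Nat.eq_zero_or_pos (u j) with h0 | h0
      · rw [h0, Nat.zero_mul] at h1; omega
      · exact h0
    obtain ⟨b', hb'pos, hb'row, hb'col⟩ :=
      ih (fun i => f i.succ) v (fun i => hf i.succ) hvpos hv.symm
    refine ⟨Fin.cons u b', ?_, ?_, ?_⟩
    · intro i j
      refine Fin.cases ?_ (fun i' => ?_) i
      · simpa using hupos j
      · simpa using hb'pos i' j
    · intro i
      refine Fin.cases ?_ (fun i' => ?_) i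
      · simpa using hu
      · simpa using hb'row i'
    · intro j
      rw [Fin.prod_univ_succ]
      simp only [Fin.cons_zero, Fin.cons_succ]
      rw [hb'col j]
      exact hw j (Finset.mem_univ j)

def tupSet (ν M : ℕ) : Finset (Fin ν → ℕ) := Fintype.piFinset (fun _ => Finset.Icc 1 M)

def prodSet (ν M : ℕ) : Finset (Fin ν → ℕ) := (tupSet ν M).filter (fun f => ∏ i, f i ≤ M)

def dSet (ν M k : ℕ) : Finset (Fin ν → ℕ) := (tupSet ν M).filter (fun f => ∏ i, f i = k)

def pairSet (ν M : ℕ) : Finset ((Fin ν → ℕ) × (Fin ν → ℕ)) :=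
  ((tupSet ν M) ×ˢ (tupSet ν M)).filter (fun p => ∏ i, p.1 i = ∏ i, p.2 i)

lemma multDiv_eq (ν M k : ℕ) : multDiv ν M k = (dSet ν M k).card := by
  rw [multDiv, ← Nat.card_eq_finsetCard]
  refine Nat.card_congr (Equiv.subtypeEquivRight fun f => ?_)
  simp [dSet, tupSet, Fintype.mem_piFinset, Finset.mem_Icc, Finset.mem_filter]

lemma mem_tupSet {ν M : ℕ} {f : Fin ν → ℕ} :
    f ∈ tupSet ν M ↔ ∀ i, 1 ≤ f i ∧ f i ≤ M := by
  simp [tupSet, Fintype.mem_piFinset, Finset.mem_Icc]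

lemma prod_mem_Icc {ν M : ℕ} {f : Fin ν → ℕ} (hf : f ∈ tupSet ν M) :
    ∏ i, f i ∈ Finset.Icc 1 (M ^ ν) := by
  rw [mem_tupSet] at hf
  rw [Finset.mem_Icc]
  constructor
  · exact Finset.one_le_prod' fun i _ => (hf i).1
  · calc ∏ i, f i ≤ M ^ (Finset.univ : Finset (Fin ν)).card :=
        Finset.prod_le_pow_card _ _ _ fun i _ => (hf i).2
    _ = M ^ ν := by rw [Finset.card_univ, Fintype.card_fin]

lemma sum_sq_eq_card_pairSet (ν M : ℕ) :
    ∑ k ∈ Finset.Icc 1 (M ^ ν), (dSet ν M k).card ^ 2 = (pairSet ν M).card := by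
  classical
  rw [Finset.card_eq_sum_card_fiberwise (f := fun p => ∏ i, p.1 i)
    (t := Finset.Icc 1 (M ^ ν))]
  · refine Finset.sum_congr rfl fun k _ => ?_
    have : (pairSet ν M).filter (fun p => ∏ i, p.1 i = k) = (dSet ν M k) ×ˢ (dSet ν M k) := by
      ext p
      simp only [pairSet, dSet, Finset.mem_filter, Finset.mem_product]
      constructor
      · rintro ⟨⟨⟨h1, h2⟩, h3⟩, h4⟩
        exact ⟨⟨h1, h4⟩, h2, h3 ▸ h4⟩
      · rintro ⟨⟨h1, h4⟩, h2, h5⟩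
        exact ⟨⟨⟨h1, h2⟩, by rw [h4, h5]⟩, h4⟩
    rw [this, Finset.card_product, sq]
  · intro p hp
    simp only [Finset.mem_coe, pairSet, Finset.mem_filter, Finset.mem_product] at hp
    exact prod_mem_Icc hp.1.1

lemma mem_pairSet {ν M : ℕ} {p : (Fin ν → ℕ) × (Fin ν → ℕ)} :
    p ∈ pairSet ν M ↔ (∀ i, 1 ≤ p.1 i ∧ p.1 i ≤ M) ∧ (∀ i, 1 ≤ p.2 i ∧ p.2 i ≤ M) ∧
      ∏ i, p.1 i = ∏ i, p.2 i := by
  simp only [pairSet, Finset.mem_filter, Finset.mem_product, mem_tupSet]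
  tauto

noncomputable def pairToMatrix (ν : ℕ) (p : (Fin ν → ℕ) × (Fin ν → ℕ)) :
    Fin ν → Fin ν → ℕ :=
  Classical.epsilon (fun b : Fin ν → Fin ν → ℕ => (∀ i j, 0 < b i j) ∧
    (∀ i, ∏ j, b i j = p.1 i) ∧ (∀ j, ∏ i, b i j = p.2 j))

lemma pairToMatrix_spec {ν M : ℕ} {p : (Fin ν → ℕ) × (Fin ν → ℕ)} (hp : p ∈ pairSet ν M) :
    (∀ i j, 0 < pairToMatrix ν p i j) ∧ (∀ i, ∏ j, pairToMatrix ν p i j = p.1 i) ∧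
      (∀ j, ∏ i, pairToMatrix ν p i j = p.2 j) := by
  rw [mem_pairSet] at hp
  obtain ⟨h1, h2, h3⟩ := hp
  exact Classical.epsilon_spec
    (exists_matrix ν p.1 p.2 (fun i => (h1 i).1) (fun j => (h2 j).1) h3)

lemma card_pairSet_le (ν M : ℕ) :
    (pairSet ν M).card ≤ (prodSet ν M).card ^ ν := by
  classical
  have hB : (Fintype.piFinset (fun _ : Fin ν => prodSet ν M)).card = (prodSet ν M).card ^ ν := by
    rw [Fintype.card_piFinset, Finset.prod_const, Finset.card_univ, Fintype.card_fin]
  rw [← hB]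
  apply Finset.card_le_card_of_injOn (f := pairToMatrix ν)
  · intro p hp
    obtain ⟨hpos, hrow, hcol⟩ := pairToMatrix_spec hp
    rw [Finset.mem_coe, mem_pairSet] at hp
    obtain ⟨h1, h2, h3⟩ := hp
    rw [Finset.mem_coe, Fintype.mem_piFinset]
    intro i
    simp only [prodSet, Finset.mem_filter, mem_tupSet]
    refine ⟨fun j => ⟨hpos i j, ?_⟩, ?_⟩
    · have hle : pairToMatrix ν p i j ≤ ∏ j', pairToMatrix ν p i j' :=
        Finset.single_le_prod' (fun j' _ => Nat.one_le_iff_ne_zero.mpr (hpos i j').ne')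
          (Finset.mem_univ j)
      rw [hrow i] at hle
      exact le_trans hle (h1 i).2
    · rw [hrow i]; exact (h1 i).2
  · intro p hp q hq hpq
    obtain ⟨_, hrowp, hcolp⟩ := pairToMatrix_spec hp
    obtain ⟨_, hrowq, hcolq⟩ := pairToMatrix_spec hq
    have h1 : p.1 = q.1 := funext fun i => by rw [← hrowp i, ← hrowq i, hpq]
    have h2 : p.2 = q.2 := funext fun j => by rw [← hcolp j, ← hcolq j, hpq]
    exact Prod.ext h1 h2

lemma pow_mul_sub_le (x y : ℝ) (hx : 0 ≤ x) (hxy : x ≤ y) (n : ℕ) :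
    ((n:ℝ)+1) * x^n * (y - x) ≤ y^(n+1) - x^(n+1) := by
  have hgeom := geom_sum₂_mul y x (n+1)
  rw [← hgeom]
  apply mul_le_mul_of_nonneg_right ?_ (by linarith)
  have h1 : ((n:ℝ)+1) * x^n = ∑ _i ∈ Finset.range (n+1), x^n := by
    rw [Finset.sum_const, Finset.card_range]; push_cast; ring
  rw [h1]
  apply Finset.sum_le_sum
  intro i hi
  have hin : i ≤ n := Nat.lt_succ_iff.mp (Finset.mem_range.mp hi)
  have h2 : x^n = x^i * x^(n+1-1-i) := by
    rw [← pow_add]; congr 1; omega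
  rw [h2]
  exact mul_le_mul_of_nonneg_right (pow_le_pow_left₀ hx hxy i) (pow_nonneg hx _)

lemma binom_two_term (A : ℝ) (hA : 0 ≤ A) (n : ℕ) :
    A^(n+1) + ((n:ℝ)+1)*A^n ≤ (A+1)^(n+1) := by
  induction n with
  | zero => simp
  | succ n ih =>
    have h1 : (A+1)^(n+1+1) = (A+1) * (A+1)^(n+1) := by ring
    have h2 : (A+1) * (A^(n+1) + ((n:ℝ)+1)*A^n) ≤ (A+1) * (A+1)^(n+1) :=
      mul_le_mul_of_nonneg_left ih (by linarith)
    have h3 : 0 ≤ A^n := pow_nonneg hA n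
    have key : A^(n+1+1) + ((n:ℝ)+1+1)*A^(n+1) + ((n:ℝ)+1)*A^n
        = (A+1) * (A^(n+1) + ((n:ℝ)+1)*A^n) := by ring
    push_cast
    nlinarith [h2, key, h3, h1]

lemma log_gap (m : ℕ) (hm : 2 ≤ m) :
    1/(m:ℝ) ≤ Real.log m - Real.log (m-1 : ℕ) := by
  have hx : (2:ℝ) ≤ (m:ℝ) := by exact_mod_cast hm
  have hcast : ((m-1 : ℕ) : ℝ) = (m:ℝ) - 1 := by
    have : 1 ≤ m := by omega
    push_cast [this]; ring
  rw [hcast]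
  have hpos : (0:ℝ) < (m:ℝ) - 1 := by linarith
  have hmpos : (0:ℝ) < (m:ℝ) := by linarith
  have hdiv : ((m:ℝ)-1)/(m:ℝ) = 1 - 1/(m:ℝ) := by field_simp
  have h1 : Real.log ((m:ℝ)-1) - Real.log m = Real.log (((m:ℝ)-1)/(m:ℝ)) :=
    (Real.log_div (by linarith) (by linarith)).symm
  have h2 : Real.log (((m:ℝ)-1)/(m:ℝ)) ≤ -(1/(m:ℝ)) := by
    rw [hdiv]
    have h3 : 1 - 1/(m:ℝ) ≤ Real.exp (-(1/(m:ℝ))) := by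
      have := Real.add_one_le_exp (-(1/(m:ℝ)))
      linarith
    have h4 : (0:ℝ) < 1 - 1/(m:ℝ) := by
      have : 1/(m:ℝ) ≤ 1/2 := by
        apply div_le_div_of_nonneg_left <;> linarith
      linarith
    calc Real.log (1 - 1/(m:ℝ)) ≤ Real.log (Real.exp (-(1/(m:ℝ)))) :=
          Real.log_le_log h4 h3
    _ = -(1/(m:ℝ)) := Real.log_exp _
  linarith

lemma key_sum (M n : ℕ) (hM : 1 ≤ M) :
    ∑ m ∈ Finset.Icc 1 M, (1/(m:ℝ)) * (Real.log M + n - Real.log m)^n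
      ≤ (Real.log M + ((n:ℝ)+1))^(n+1) / ((n:ℝ)+1) := by
  set A : ℝ := Real.log M + n with hA_def
  have hlogM0 : 0 ≤ Real.log M := Real.log_nonneg (by exact_mod_cast hM)
  have hA0 : 0 ≤ A := by positivity
  have hn1 : (0:ℝ) < (n:ℝ)+1 := by positivity
  set u : ℕ → ℝ := fun m => (A - Real.log m)^(n+1) / ((n:ℝ)+1) with hu_def
  have hsplit : Finset.Icc 1 M = insert 1 (Finset.Icc 2 M) := by
    ext x; simp only [Finset.mem_Icc, Finset.mem_insert]; omega
  rw [hsplit, Finset.sum_insert (by simp)]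
  have hterm1 : (1/((1:ℕ):ℝ)) * (Real.log M + n - Real.log (1:ℕ))^n = A^n := by
    simp [hA_def]
  rw [hterm1]
  -- per-term bound
  have hper : ∀ m ∈ Finset.Icc 2 M,
      (1/(m:ℝ)) * (Real.log M + n - Real.log m)^n ≤ u (m-1) - u m := by
    intro m hm
    rw [Finset.mem_Icc] at hm
    obtain ⟨hm2, hmM⟩ := hm
    set x : ℝ := A - Real.log m with hx_def
    set y : ℝ := A - Real.log (m-1 : ℕ) with hy_def
    have hlogm : Real.log m ≤ Real.log M :=
      Real.log_le_log (by positivity) (by exact_mod_cast hmM)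
    have hx0 : 0 ≤ x := by
      have hMA : Real.log M ≤ A := by
        rw [hA_def]; linarith [Nat.cast_nonneg (α := ℝ) n]
      simp only [hx_def]; linarith
    have hxy : x ≤ y := by
      have h01 : (0:ℝ) < ((m-1:ℕ):ℝ) := by exact_mod_cast (show 0 < m - 1 by omega)
      have : Real.log ((m-1 : ℕ):ℝ) ≤ Real.log m :=
        Real.log_le_log h01 (by exact_mod_cast Nat.sub_le m 1)
      simp only [hx_def, hy_def]; linarith
    have hgap : 1/(m:ℝ) ≤ y - x := by
      have := log_gap m hm2
      simp only [hx_def, hy_def]; linarith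
    have hpow := pow_mul_sub_le x y hx0 hxy n
    have humx : u (m-1) - u m = (y^(n+1) - x^(n+1)) / ((n:ℝ)+1) := by
      simp only [hu_def, hx_def, hy_def]; ring
    rw [humx]
    have hxn : 0 ≤ x^n := pow_nonneg hx0 n
    have h1 : (1/(m:ℝ)) * x^n ≤ (y-x) * x^n := mul_le_mul_of_nonneg_right hgap hxn
    have h2 : (y-x) * x^n ≤ (y^(n+1) - x^(n+1)) / ((n:ℝ)+1) := by
      rw [le_div_iff₀ hn1]
      nlinarith [hpow]
    have hxx : (Real.log M + n - Real.log m)^n = x^n := by rw [hx_def, hA_def]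
    rw [hxx]
    linarith
  have hsum2 : ∑ m ∈ Finset.Icc 2 M, ((1/(m:ℝ)) * (Real.log M + n - Real.log m)^n)
      ≤ ∑ m ∈ Finset.Icc 2 M, (u (m-1) - u m) := Finset.sum_le_sum hper
  -- telescoping
  have htel : ∑ m ∈ Finset.Icc 2 M, (u (m-1) - u m) = u 1 - u M := by
    rw [← Finset.Ico_add_one_right_eq_Icc, Finset.sum_Ico_eq_sum_range]
    have hc : ∀ k, u (2 + k - 1) - u (2 + k) = u (k+1) - u ((k+1)+1) := by
      intro k; congr 2 <;> omega
    rw [Finset.sum_congr rfl fun k _ => hc k, Finset.sum_range_sub' (fun k => u (k+1))]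
    congr 2
    omega
  have hu1 : u 1 = A^(n+1) / ((n:ℝ)+1) := by simp [hu_def]
  have huM : 0 ≤ u M := by
    have : A - Real.log M = n := by rw [hA_def]; ring
    simp only [hu_def]
    rw [this]
    positivity
  have hbin := binom_two_term A hA0 n
  have hfin : A^n + (A^(n+1) / ((n:ℝ)+1)) ≤ (A+1)^(n+1) / ((n:ℝ)+1) := by
    rw [le_div_iff₀ hn1]
    have expand : (A^n + A^(n+1)/((n:ℝ)+1)) * ((n:ℝ)+1)
        = A^(n+1) + ((n:ℝ)+1)*A^n := by field_simp; ring
    rw [expand]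
    exact hbin
  have hAA : Real.log M + ((n:ℝ)+1) = A + 1 := by rw [hA_def]; ring
  rw [hAA]
  calc A^n + ∑ m ∈ Finset.Icc 2 M, ((1/(m:ℝ)) * (Real.log M + n - Real.log m)^n)
      ≤ A^n + (u 1 - u M) := by rw [← htel]; linarith [hsum2]
    _ ≤ A^n + A^(n+1)/((n:ℝ)+1) := by rw [hu1]; linarith [huM]
    _ ≤ (A+1)^(n+1) / ((n:ℝ)+1) := hfin

lemma mem_prodSet {ν M : ℕ} {f : Fin ν → ℕ} :
    f ∈ prodSet ν M ↔ (∀ i, 1 ≤ f i ∧ f i ≤ M) ∧ ∏ i, f i ≤ M := by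
  simp [prodSet, Finset.mem_filter, mem_tupSet]

lemma prodSet_card_succ (n M : ℕ) :
    (prodSet (n+1) M).card = ∑ m ∈ Finset.Icc 1 M, (prodSet n (M / m)).card := by
  classical
  rw [Finset.card_eq_sum_card_fiberwise (f := fun f => f 0) (t := Finset.Icc 1 M)
    (fun f hf => by
      rw [Finset.mem_coe, mem_prodSet] at hf
      rw [Finset.mem_coe, Finset.mem_Icc]
      exact ⟨(hf.1 0).1, (hf.1 0).2⟩)]
  refine Finset.sum_congr rfl fun m hm => ?_
  rw [Finset.mem_Icc] at hm
  obtain ⟨hm1, hmM⟩ := hm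
  have hmpos : 0 < m := hm1
  refine Finset.card_bij' (fun f _ => Fin.tail f) (fun t _ => Fin.cons m t) ?hi ?hj ?left ?right
  case hi =>
    intro f hf
    simp only [Finset.mem_filter] at hf
    obtain ⟨hf, hf0⟩ := hf
    rw [mem_prodSet] at hf
    obtain ⟨hent, hprod⟩ := hf
    rw [Fin.prod_univ_succ, hf0] at hprod
    have htail : ∏ i, Fin.tail f i ≤ M / m := by
      rw [Nat.le_div_iff_mul_le hmpos, Nat.mul_comm]
      exact hprod
    rw [mem_prodSet]
    refine ⟨fun i => ⟨(hent i.succ).1, ?_⟩, htail⟩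
    calc Fin.tail f i ≤ ∏ i', Fin.tail f i' :=
      Finset.single_le_prod' (fun i' _ => (hent i'.succ).1) (Finset.mem_univ i)
    _ ≤ M / m := htail
  case hj =>
    intro t ht
    rw [mem_prodSet] at ht
    obtain ⟨hent, hprod⟩ := ht
    simp only [Finset.mem_filter]
    constructor
    · rw [mem_prodSet]
      constructor
      · intro i
        refine Fin.cases ?_ (fun i' => ?_) i
        · simpa using ⟨hm1, hmM⟩
        · simp only [Fin.cons_succ]
          exact ⟨(hent i').1, le_trans (hent i').2 (Nat.div_le_self M m)⟩
      · rw [Fin.prod_univ_succ]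
        simp only [Fin.cons_zero, Fin.cons_succ]
        calc m * ∏ i, t i ≤ m * (M / m) := Nat.mul_le_mul_left m hprod
        _ ≤ M := Nat.mul_div_le M m
    · simp
  case left =>
    intro f hf
    simp only [Finset.mem_filter] at hf
    have hct : Fin.cons (f 0) (Fin.tail f) = f := Fin.cons_self_tail f
    rw [hf.2] at hct
    exact hct
  case right =>
    intro t _
    simp

lemma card_prodSet_le (n : ℕ) : ∀ (M : ℕ), 1 ≤ M →
    ((prodSet n M).card : ℝ) ≤ M * (Real.log M + n)^n / n.factorial := by
  induction n with
  | zero =>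
    intro M hM
    have hone : (prodSet 0 M).card ≤ 1 :=
      Finset.card_le_one.mpr fun a _ b _ => Subsingleton.elim a b
    have h1M : (1:ℝ) ≤ M := by exact_mod_cast hM
    calc ((prodSet 0 M).card : ℝ) ≤ 1 := by exact_mod_cast hone
    _ ≤ M * (Real.log M + 0)^0 / Nat.factorial 0 := by simp [h1M]
    _ = M * (Real.log M + (0:ℕ))^(0:ℕ) / Nat.factorial 0 := by norm_num
  | succ n ih =>
    intro M hM
    rw [prodSet_card_succ, Nat.cast_sum]
    have hlogM0 : 0 ≤ Real.log M := Real.log_nonneg (by exact_mod_cast hM)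
    have hstep : ∀ m ∈ Finset.Icc 1 M, ((prodSet n (M/m)).card : ℝ)
        ≤ (M / n.factorial) * ((1/(m:ℝ)) * (Real.log M + n - Real.log m)^n) := by
      intro m hm
      rw [Finset.mem_Icc] at hm
      obtain ⟨hm1, hmM⟩ := hm
      have hdiv1 : 1 ≤ M / m := (Nat.one_le_div_iff hm1).mpr hmM
      have hmR : (0:ℝ) < m := by exact_mod_cast hm1
      have hdivR : (0:ℝ) < ((M/m : ℕ):ℝ) := by exact_mod_cast hdiv1
      have hcast : ((M/m : ℕ):ℝ) ≤ (M:ℝ)/(m:ℝ) := Nat.cast_div_le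
      have hlog : Real.log ((M/m : ℕ):ℝ) ≤ Real.log M - Real.log m := by
        have h1 : Real.log ((M/m : ℕ):ℝ) ≤ Real.log ((M:ℝ)/(m:ℝ)) :=
          Real.log_le_log hdivR hcast
        rwa [Real.log_div (by positivity) (by positivity)] at h1
      have hbase0 : 0 ≤ Real.log ((M/m : ℕ):ℝ) + n := by
        have : 0 ≤ Real.log ((M/m : ℕ):ℝ) := Real.log_nonneg (by exact_mod_cast hdiv1)
        positivity
      have hpow : (Real.log ((M/m : ℕ):ℝ) + n)^n ≤ (Real.log M + n - Real.log m)^n :=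
        pow_le_pow_left₀ hbase0 (by linarith) n
      calc ((prodSet n (M/m)).card : ℝ)
          ≤ ((M/m : ℕ):ℝ) * (Real.log ((M/m : ℕ):ℝ) + n)^n / n.factorial :=
            ih (M/m) hdiv1
        _ ≤ ((M:ℝ)/(m:ℝ)) * (Real.log M + n - Real.log m)^n / n.factorial := by
            have hnum : ((M/m:ℕ):ℝ) * (Real.log ((M/m:ℕ):ℝ) + n)^n
                ≤ ((M:ℝ)/(m:ℝ)) * (Real.log M + n - Real.log m)^n :=
              mul_le_mul hcast hpow (pow_nonneg hbase0 n) (by positivity)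
            exact (div_le_div_iff_of_pos_right (by positivity)).mpr hnum
        _ = (M / n.factorial) * ((1/(m:ℝ)) * (Real.log M + n - Real.log m)^n) := by
            ring
    calc ∑ m ∈ Finset.Icc 1 M, ((prodSet n (M/m)).card : ℝ)
        ≤ ∑ m ∈ Finset.Icc 1 M,
          ((M / n.factorial) * ((1/(m:ℝ)) * (Real.log M + n - Real.log m)^n)) :=
          Finset.sum_le_sum hstep
      _ = (M / n.factorial) * ∑ m ∈ Finset.Icc 1 M,
          ((1/(m:ℝ)) * (Real.log M + n - Real.log m)^n) := by
          rw [Finset.mul_sum]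
      _ ≤ (M / n.factorial) * ((Real.log M + ((n:ℝ)+1))^(n+1) / ((n:ℝ)+1)) := by
          apply mul_le_mul_of_nonneg_left (key_sum M n hM) (by positivity)
      _ = M * (Real.log M + ((n+1 : ℕ):ℝ))^(n+1) / ((n+1).factorial : ℝ) := by
          rw [Nat.factorial_succ]
          have hfac : (0:ℝ) < n.factorial := by positivity
          push_cast
          field_simp

theorem multDiv_sq_sum_bound :
    ∀ M ν : ℕ, 0 < M → 0 < ν →
      (∑ k ∈ Finset.Icc 1 (M ^ ν), (multDiv ν M k : ℝ) ^ 2) ≤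
        (M : ℝ) ^ ν * (Real.exp 1 * Real.log M / ν + Real.exp 1) ^ (ν ^ 2) := by
  intro M ν hM hν
  have hM1 : (1:ℝ) ≤ M := by exact_mod_cast hM
  have hL0 : 0 ≤ Real.log M := Real.log_nonneg hM1
  have hνR : (0:ℝ) < ν := by exact_mod_cast hν
  set L : ℝ := Real.log M with hL_def
  set E : ℝ := Real.exp 1 * L / ν + Real.exp 1 with hE_def
  have hE_eq : E = Real.exp 1 * (L + ν) / ν := by
    rw [hE_def]; field_simp
  have hLHS : (∑ k ∈ Finset.Icc 1 (M ^ ν), (multDiv ν M k : ℝ) ^ 2)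
      = ((pairSet ν M).card : ℝ) := by
    rw [← sum_sq_eq_card_pairSet ν M]
    push_cast
    exact Finset.sum_congr rfl fun k _ => by rw [multDiv_eq]
  rw [hLHS]
  have h1 : ((pairSet ν M).card : ℝ) ≤ (((prodSet ν M).card : ℝ))^ν := by
    exact_mod_cast card_pairSet_le ν M
  have h2 : ((prodSet ν M).card : ℝ) ≤ M * (L + ν)^ν / ν.factorial :=
    card_prodSet_le ν M hM
  have h2' : (((prodSet ν M).card:ℝ))^ν ≤ (M * (L + ν)^ν / ν.factorial)^ν :=
    pow_le_pow_left₀ (by positivity) h2 ν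
  have hfact : ((ν:ℝ))^ν / ν.factorial ≤ Real.exp 1 ^ ν := by
    have hsingle : ((ν:ℝ))^ν / ν.factorial
        ≤ ∑ i ∈ Finset.range (ν+1), ((ν:ℝ))^i / i.factorial :=
      Finset.single_le_sum (f := fun i => ((ν:ℝ))^i / i.factorial)
        (fun i _ => by positivity) (Finset.self_mem_range_succ ν)
    have hexp := Real.sum_le_exp_of_nonneg (x := (ν:ℝ)) (by positivity) (ν+1)
    have heq : Real.exp (ν:ℝ) = Real.exp 1 ^ ν := by
      rw [← Real.exp_nat_mul]; simp
    rw [← heq]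
    exact le_trans hsingle hexp
  have hνν : ((ν:ℝ))^ν ≤ Real.exp 1 ^ ν * ν.factorial := by
    have hfac : (0:ℝ) < ν.factorial := by positivity
    rw [div_le_iff₀ hfac] at hfact
    exact hfact
  have hbase : (L + ν)^ν / ν.factorial ≤ E^ν := by
    rw [hE_eq, div_pow, mul_pow]
    rw [div_le_div_iff₀ (by positivity) (by positivity)]
    calc (L + ν)^ν * (ν:ℝ)^ν ≤ (L + ν)^ν * (Real.exp 1 ^ ν * ν.factorial) :=
      mul_le_mul_of_nonneg_left hνν (by positivity)
    _ = Real.exp 1 ^ ν * (L + ν)^ν * ν.factorial := by ring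
  have h3 : (M * (L + ν)^ν / ν.factorial)^ν ≤ (M * E^ν)^ν := by
    apply pow_le_pow_left₀ (by positivity)
    rw [mul_div_assoc]
    exact mul_le_mul_of_nonneg_left hbase (by positivity)
  have h4 : ((M:ℝ) * E^ν)^ν = (M:ℝ)^ν * E^(ν^2) := by
    rw [mul_pow, ← pow_mul, ← pow_two]
  calc ((pairSet ν M).card : ℝ) ≤ (((prodSet ν M).card : ℝ))^ν := h1
    _ ≤ (M * (L + ν)^ν / ν.factorial)^ν := h2'
    _ ≤ (M * E^ν)^ν := h3
    _ = (M:ℝ)^ν * E^(ν^2) := h4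
end

section
/- There is an absolute constant C such that the following holds. Let q be a prime power, let R be an integer with 0 < R < 2R < 2√q, let N ≥ 1 be an integer, and let α_1, …, α_N be complex numbers. Then Σ_{R < t ≤ 2R} Σ_{a=1, gcd(a,Δ(t))=1}^{Δ(t)} |T(a/Δ(t))|² ≤ C · ( q² + N ) · Z. -/
open Finset

/-- `e(x) = exp(2πix)`. -/
noncomputable def eAdd (x : ℝ) : ℂ := Complex.exp (2 * Real.pi * Complex.I * x)

/-- `Δ(t) = 4q - t²`. -/
def Del (q t : ℕ) : ℕ := 4 * q - t ^ 2

lemma eAdd_add (x y : ℝ) : eAdd (x + y) = eAdd x * eAdd y := by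
  rw [eAdd, eAdd, eAdd, ← Complex.exp_add]
  congr 1
  push_cast
  ring

lemma norm_eAdd (x : ℝ) : ‖eAdd x‖ = 1 := by
  rw [eAdd, Complex.norm_exp]
  have : (2 * Real.pi * Complex.I * x).re = 0 := by simp
  rw [this, Real.exp_zero]

lemma conj_eAdd (x : ℝ) : (starRingEnd ℂ) (eAdd x) = eAdd (-x) := by
  rw [eAdd, eAdd, ← Complex.exp_conj]
  congr 1
  apply Complex.ext <;> simp <;> ring

lemma eAdd_nat_mul (u : ℕ) (θ : ℝ) : eAdd ((u : ℝ) * θ) = eAdd θ ^ u := by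
  rw [eAdd, eAdd, ← Complex.exp_nat_mul]
  congr 1
  push_cast
  ring

lemma norm_eAdd_sub_one_sq (θ : ℝ) :
    ‖eAdd θ - 1‖ ^ 2 = 4 * Real.sin (Real.pi * θ) ^ 2 := by
  have h : (2 * Real.pi * Complex.I * θ) = ((2 * Real.pi * θ : ℝ) : ℂ) * Complex.I := by
    push_cast; ring
  rw [eAdd, h, Complex.sq_norm, Complex.normSq_apply]
  simp only [Complex.sub_re, Complex.sub_im, Complex.exp_ofReal_mul_I_re,
    Complex.exp_ofReal_mul_I_im, Complex.one_re, Complex.one_im]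
  have h1 : Real.cos (2 * Real.pi * θ) = Real.cos (Real.pi * θ) ^ 2 - Real.sin (Real.pi * θ) ^ 2 := by
    rw [← Real.cos_two_mul']; ring_nf
  have h2 : Real.sin (Real.pi * θ) ^ 2 + Real.cos (Real.pi * θ) ^ 2 = 1 :=
    Real.sin_sq_add_cos_sq _
  nlinarith [Real.sin_sq_add_cos_sq (2 * Real.pi * θ)]

lemma four_mul_le_norm_eAdd_sub_one (θ : ℝ) :
    4 * |θ - round θ| ≤ ‖eAdd θ - 1‖ := by
  set t : ℝ := θ - round θ with ht
  have hhalf : |t| ≤ 1 / 2 := abs_sub_round θ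
  have hsin : |Real.sin (Real.pi * θ)| = |Real.sin (Real.pi * t)| := by
    have : Real.pi * θ = Real.pi * t + (round θ : ℤ) * Real.pi := by rw [ht]; ring
    rw [this, Real.sin_add_int_mul_pi, abs_mul]
    have habs : |((-1 : ℝ) ^ (round θ))| = 1 := by
      rcases Int.even_or_odd (round θ) with he | ho
      · rw [he.neg_one_zpow, abs_one]
      · rw [ho.neg_one_zpow]; norm_num
    rw [habs, one_mul]
  have hj : 2 / Real.pi * |Real.pi * t| ≤ |Real.sin (Real.pi * t)| := by
    apply Real.mul_abs_le_abs_sin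
    rw [abs_mul, abs_of_nonneg Real.pi_pos.le]
    calc Real.pi * |t| ≤ Real.pi * (1 / 2) := by
          exact mul_le_mul_of_nonneg_left hhalf Real.pi_pos.le
      _ = Real.pi / 2 := by ring
  have hj2 : 2 * |t| ≤ |Real.sin (Real.pi * θ)| := by
    rw [hsin]
    have : 2 / Real.pi * |Real.pi * t| = 2 * |t| := by
      rw [abs_mul, abs_of_nonneg Real.pi_pos.le]
      field_simp
    linarith [hj, this ▸ hj]
  have hsq := norm_eAdd_sub_one_sq θ
  nlinarith [norm_nonneg (eAdd θ - 1), abs_nonneg t, abs_nonneg (Real.sin (Real.pi * θ)),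
    sq_abs (Real.sin (Real.pi * θ))]

lemma norm_geom_sum_le (L : ℕ) (θ : ℝ) (h : eAdd θ ≠ 1) :
    ‖∑ u ∈ range L, eAdd ((u : ℝ) * θ)‖ ≤ 2 / ‖eAdd θ - 1‖ := by
  have hne : eAdd θ - 1 ≠ 0 := sub_ne_zero.mpr h
  have hgeom : (∑ u ∈ range L, eAdd ((u : ℝ) * θ)) * (eAdd θ - 1) = eAdd θ ^ L - 1 := by
    have : ∀ u ∈ range L, eAdd ((u : ℝ) * θ) = eAdd θ ^ u := fun u _ => eAdd_nat_mul u θ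
    rw [Finset.sum_congr rfl this]
    exact geom_sum_mul _ _
  have h2 : ‖eAdd θ ^ L - 1‖ ≤ 2 := by
    calc ‖eAdd θ ^ L - 1‖ ≤ ‖eAdd θ ^ L‖ + ‖(1 : ℂ)‖ := norm_sub_le _ _
      _ = 2 := by rw [norm_pow, norm_eAdd]; norm_num
  rw [le_div_iff₀ (norm_pos_iff.mpr hne)]
  calc ‖∑ u ∈ range L, eAdd ((u : ℝ) * θ)‖ * ‖eAdd θ - 1‖
      = ‖eAdd θ ^ L - 1‖ := by rw [← norm_mul, hgeom]
    _ ≤ 2 := h2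

lemma sum_inv_sq_Icc_le (K : ℕ) : ∑ k ∈ Icc 1 K, (1 : ℝ) / (k : ℝ) ^ 2 ≤ 2 := by
  have h : ∀ K : ℕ, ∑ k ∈ Icc 1 K, (1 : ℝ) / (k : ℝ) ^ 2 ≤ 2 - 2 / (K + 1) := by
    intro K
    induction K with
    | zero => norm_num
    | succ n ih =>
      rw [Finset.sum_Icc_succ_top (by omega)]
      set x : ℝ := (n : ℝ) + 1 with hxdef
      have hx : (1 : ℝ) ≤ x := by rw [hxdef]; linarith [Nat.cast_nonneg (α := ℝ) n]
      have hx0 : (0:ℝ) < x := by linarith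
      have hx1 : (0:ℝ) < x + 1 := by linarith
      have key : (1:ℝ) / x ^ 2 ≤ 2 / x - 2 / (x + 1) := by
        rw [div_sub_div _ _ hx0.ne' hx1.ne', div_le_div_iff₀ (by positivity) (by positivity)]
        nlinarith
      push_cast
      push_cast at ih
      linarith
  have h2 := h K
  have : (0:ℝ) ≤ 2 / ((K:ℝ) + 1) := by positivity
  linarith

lemma sum_inv_sq_distinct {T : Finset ℕ} (hT : ∀ k ∈ T, 1 ≤ k) :
    ∑ k ∈ T, (1 : ℝ) / (k : ℝ) ^ 2 ≤ 2 := by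
  have hsub : T ⊆ Icc 1 (T.sup id) := by
    intro k hk
    rw [mem_Icc]
    exact ⟨hT k hk, Finset.le_sup (f := id) hk⟩
  calc ∑ k ∈ T, (1 : ℝ) / (k : ℝ) ^ 2 ≤ ∑ k ∈ Icc 1 (T.sup id), (1 : ℝ) / (k : ℝ) ^ 2 :=
        Finset.sum_le_sum_of_subset_of_nonneg hsub (fun _ _ _ => by positivity)
    _ ≤ 2 := sum_inv_sq_Icc_le _

lemma packing_one_side {ι : Type*} [DecidableEq ι] (P : Finset ι) (w : ι → ℝ) (δ : ℝ)
    (hδ : 0 < δ) (h1 : ∀ p ∈ P, δ ≤ w p)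
    (h2 : ∀ p ∈ P, ∀ q ∈ P, p ≠ q → δ ≤ |w p - w q|) :
    ∑ p ∈ P, 1 / (w p) ^ 2 ≤ 2 / δ ^ 2 := by
  classical
  set k : ι → ℕ := fun p => ⌊w p / δ⌋₊ with hk
  have hk1 : ∀ p ∈ P, 1 ≤ k p := fun p hp =>
    Nat.le_floor (by rw [Nat.cast_one, le_div_iff₀ hδ]; linarith [h1 p hp])
  have hkle : ∀ p ∈ P, (k p : ℝ) * δ ≤ w p := by
    intro p hp
    rw [← le_div_iff₀ hδ]
    exact Nat.floor_le (div_nonneg (le_trans hδ.le (h1 p hp)) hδ.le)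
  have hklt : ∀ p ∈ P, w p < ((k p : ℝ) + 1) * δ := by
    intro p hp
    have := Nat.lt_floor_add_one (w p / δ)
    rw [div_lt_iff₀ hδ] at this
    exact this
  have hinj : ∀ p ∈ P, ∀ q ∈ P, k p = k q → p = q := by
    intro p hp q hq hkpq
    by_contra hne
    have hd := h2 p hp q hq hne
    have h5 := hkle p hp; have h6 := hkle q hq
    have h7 := hklt p hp; have h8 := hklt q hq
    rw [hkpq] at h5 h7
    rcases abs_cases (w p - w q) with ⟨he, _⟩ | ⟨he, _⟩ <;> rw [he] at hd <;> nlinarith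
  have step1 : ∑ p ∈ P, 1 / (w p) ^ 2 ≤ ∑ p ∈ P, 1 / ((k p : ℝ) * δ) ^ 2 := by
    apply Finset.sum_le_sum
    intro p hp
    have hkp : (0:ℝ) < (k p : ℝ) * δ := by
      have := hk1 p hp
      have : (1:ℝ) ≤ (k p : ℝ) := by exact_mod_cast this
      nlinarith
    apply one_div_le_one_div_of_le (by positivity)
    have := hkle p hp
    nlinarith
  have step2 : ∑ p ∈ P, 1 / ((k p : ℝ) * δ) ^ 2 = (1 / δ ^ 2) * ∑ m ∈ P.image k, 1 / (m : ℝ) ^ 2 := by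
    rw [Finset.sum_image hinj, Finset.mul_sum]
    apply Finset.sum_congr rfl
    intro p hp
    rw [mul_pow]
    rw [one_div, mul_inv, ← one_div, ← one_div]
    ring
  have step3 : ∑ m ∈ P.image k, 1 / (m : ℝ) ^ 2 ≤ 2 := by
    apply sum_inv_sq_distinct
    intro m hm
    rw [Finset.mem_image] at hm
    obtain ⟨p, hp, rfl⟩ := hm
    exact hk1 p hp
  calc ∑ p ∈ P, 1 / (w p) ^ 2 ≤ (1 / δ ^ 2) * ∑ m ∈ P.image k, 1 / (m : ℝ) ^ 2 := by
        rw [← step2]; exact step1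
    _ ≤ (1 / δ ^ 2) * 2 := by
        apply mul_le_mul_of_nonneg_left step3 (by positivity)
    _ = 2 / δ ^ 2 := by ring

lemma packing_sum {ι : Type*} [DecidableEq ι] (S : Finset ι) (v : ι → ℝ) (δ : ℝ) (hδ : 0 < δ)
    (h1 : ∀ p ∈ S, δ ≤ |v p|)
    (h2 : ∀ p ∈ S, ∀ q ∈ S, p ≠ q → δ ≤ |v p - v q|) :
    ∑ p ∈ S, 1 / (v p) ^ 2 ≤ 4 / δ ^ 2 := by
  classical
  set Pos := S.filter (fun p => 0 < v p) with hPos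
  set Neg := S.filter (fun p => ¬ 0 < v p) with hNeg
  have hsplit : ∑ p ∈ S, 1 / (v p) ^ 2 = ∑ p ∈ Pos, 1 / (v p) ^ 2 + ∑ p ∈ Neg, 1 / (v p) ^ 2 :=
    (Finset.sum_filter_add_sum_filter_not S _ _).symm
  have hpos : ∑ p ∈ Pos, 1 / (v p) ^ 2 ≤ 2 / δ ^ 2 := by
    apply packing_one_side Pos v δ hδ
    · intro p hp
      rw [hPos, Finset.mem_filter] at hp
      have := h1 p hp.1
      rw [abs_of_pos hp.2] at this
      exact this
    · intro p hp q hq hne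
      rw [hPos, Finset.mem_filter] at hp hq
      exact h2 p hp.1 q hq.1 hne
  have hneg : ∑ p ∈ Neg, 1 / (v p) ^ 2 ≤ 2 / δ ^ 2 := by
    have : ∑ p ∈ Neg, 1 / (v p) ^ 2 = ∑ p ∈ Neg, 1 / (-v p) ^ 2 := by
      apply Finset.sum_congr rfl; intro p _; rw [neg_pow]; ring_nf
    rw [this]
    apply packing_one_side Neg (fun p => -v p) δ hδ
    · intro p hp
      rw [hNeg, Finset.mem_filter] at hp
      have := h1 p hp.1
      have hvn : v p < 0 := by
        rcases lt_trichotomy (v p) 0 with h | h | h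
        · exact h
        · rw [h] at this; simp at this; linarith
        · exact absurd h hp.2
      rw [abs_of_neg hvn] at this
      exact this
    · intro p hp q hq hne
      rw [hNeg, Finset.mem_filter] at hp hq
      rw [show -v p - -v q = v q - v p from by ring, abs_sub_comm]
      exact h2 p hp.1 q hq.1 hne
  have h4 : (2:ℝ) / δ ^ 2 + 2 / δ ^ 2 = 4 / δ ^ 2 := by ring
  linarith

lemma count_identity (L : ℕ) (g : ℤ → ℂ) :
    ∑ u ∈ range L, ∑ v ∈ range L, g ((u : ℤ) - (v : ℤ)) =
    ∑ j ∈ Finset.Icc (1 - (L : ℤ)) ((L : ℤ) - 1), (((L : ℤ) - |j| : ℤ) : ℂ) * g j := by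
  induction L with
  | zero => simp
  | succ L ih =>
    rw [Finset.sum_range_succ]
    have hrow : ∀ u ∈ range (L + 1), True := fun _ _ => trivial
    have inner : ∀ u : ℕ, ∑ v ∈ range (L + 1), g ((u : ℤ) - (v : ℤ))
        = (∑ v ∈ range L, g ((u : ℤ) - (v : ℤ))) + g ((u : ℤ) - (L : ℤ)) := by
      intro u; rw [Finset.sum_range_succ]
    rw [Finset.sum_congr rfl (fun u _ => inner u)]
    rw [Finset.sum_add_distrib, ih]
    have h1 : ∑ u ∈ range L, g ((u : ℤ) - (L : ℤ)) = ∑ j ∈ Finset.Icc (-(L:ℤ)) (-1), g j := by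
      refine Finset.sum_nbij' (fun u => (u : ℤ) - L) (fun j => (j + L).toNat) ?_ ?_ ?_ ?_ ?_
      · intro a ha
        rw [Finset.mem_range] at ha
        rw [Finset.mem_Icc]
        omega
      · intro a ha
        rw [Finset.mem_Icc] at ha
        rw [Finset.mem_range]
        omega
      · intro a ha; rw [Finset.mem_range] at ha; omega
      · intro a ha; rw [Finset.mem_Icc] at ha; omega
      · intro a _; rfl
    have h2 : ∑ v ∈ range (L + 1), g ((L : ℤ) - (v : ℤ)) = ∑ j ∈ Finset.Icc (0:ℤ) L, g j := by
      refine Finset.sum_nbij' (fun v => (L : ℤ) - v) (fun j => (L - j).toNat) ?_ ?_ ?_ ?_ ?_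
      · intro a ha
        rw [Finset.mem_range] at ha
        rw [Finset.mem_Icc]
        omega
      · intro a ha
        rw [Finset.mem_Icc] at ha
        rw [Finset.mem_range]
        omega
      · intro a ha; rw [Finset.mem_range] at ha; omega
      · intro a ha; rw [Finset.mem_Icc] at ha; omega
      · intro a _; rfl
    rw [h1, h2]
    -- goal: Σ_{Icc(1-L)(L-1)} (L-|j|) g j + Σ_{Icc(-L)(-1)} g j + Σ_{Icc 0 L} g j
    --     = Σ_{Icc(-L)(L)} (L+1-|j|) g j
    have hext : ∑ j ∈ Finset.Icc (1 - (L:ℤ)) ((L:ℤ) - 1), (((L : ℤ) - |j| : ℤ) : ℂ) * g j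
        = ∑ j ∈ Finset.Icc (-(L:ℤ)) ((L:ℤ)), (((L : ℤ) - |j| : ℤ) : ℂ) * g j := by
      apply Finset.sum_subset
      · intro j hj
        rw [Finset.mem_Icc] at *
        omega
      · intro j hj hnj
        rw [Finset.mem_Icc] at hj
        rw [Finset.mem_Icc] at hnj
        have : |j| = L := by
          rcases le_or_gt 0 j with h | h
          · rw [abs_of_nonneg h]; omega
          · rw [abs_of_neg h]; omega
        rw [this]
        simp
    have hunion : ∑ j ∈ Finset.Icc (-(L:ℤ)) (-1), g j + ∑ j ∈ Finset.Icc (0:ℤ) L, g j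
        = ∑ j ∈ Finset.Icc (-(L:ℤ)) ((L:ℤ)), g j := by
      rw [← Finset.sum_union]
      · congr 1
        ext j
        simp only [Finset.mem_union, Finset.mem_Icc]
        omega
      · rw [Finset.disjoint_left]
        intro j hj1 hj2
        rw [Finset.mem_Icc] at hj1 hj2
        omega
    have hbounds : Finset.Icc (1 - ((L+1:ℕ):ℤ)) (((L+1:ℕ):ℤ) - 1) = Finset.Icc (-(L:ℤ)) ((L:ℤ)) := by
      ext j
      rw [Finset.mem_Icc, Finset.mem_Icc]
      push_cast
      omega
    rw [hbounds, hext, add_assoc, hunion, ← Finset.sum_add_distrib]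
    apply Finset.sum_congr rfl
    intro j hj
    have hc : ((((L+1:ℕ):ℤ) - |j| : ℤ) : ℂ) = (((L:ℤ) - |j| : ℤ) : ℂ) + 1 := by push_cast; ring
    rw [hc]
    ring

noncomputable def Dker (L : ℕ) (θ : ℝ) : ℂ :=
  ∑ j ∈ Finset.Icc (1 - (L : ℤ)) ((L : ℤ) - 1),
    ((((L : ℤ) - |j| : ℤ) : ℂ) / (L : ℂ)) * eAdd ((j : ℝ) * θ)

lemma Dker_mul_L (L : ℕ) (hL : 0 < L) (θ : ℝ) :
    (L : ℂ) * Dker L θ =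
      (∑ u ∈ range L, eAdd ((u : ℝ) * θ)) * (starRingEnd ℂ) (∑ v ∈ range L, eAdd ((v : ℝ) * θ)) := by
  have hL0 : (L : ℂ) ≠ 0 := Nat.cast_ne_zero.mpr hL.ne'
  rw [Dker, Finset.mul_sum]
  have lhs : ∀ j ∈ Finset.Icc (1 - (L : ℤ)) ((L : ℤ) - 1),
      (L : ℂ) * (((((L : ℤ) - |j| : ℤ) : ℂ) / (L : ℂ)) * eAdd ((j : ℝ) * θ))
      = (((L : ℤ) - |j| : ℤ) : ℂ) * eAdd ((j : ℝ) * θ) := by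
    intro j _
    field_simp
  rw [Finset.sum_congr rfl lhs, ← count_identity L (fun j => eAdd ((j : ℝ) * θ))]
  rw [map_sum, Finset.sum_mul_sum]
  apply Finset.sum_congr rfl
  intro u _
  apply Finset.sum_congr rfl
  intro v _
  rw [conj_eAdd, ← eAdd_add]
  congr 1
  push_cast
  ring

lemma norm_Dker_le (L : ℕ) (hL : 0 < L) (θ : ℝ) : ‖Dker L θ‖ ≤ 2 * L := by
  rw [Dker]
  calc ‖∑ j ∈ Finset.Icc (1 - (L : ℤ)) ((L : ℤ) - 1),
        ((((L : ℤ) - |j| : ℤ) : ℂ) / (L : ℂ)) * eAdd ((j : ℝ) * θ)‖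
      ≤ ∑ j ∈ Finset.Icc (1 - (L : ℤ)) ((L : ℤ) - 1),
        ‖((((L : ℤ) - |j| : ℤ) : ℂ) / (L : ℂ)) * eAdd ((j : ℝ) * θ)‖ := norm_sum_le _ _
    _ ≤ ∑ j ∈ Finset.Icc (1 - (L : ℤ)) ((L : ℤ) - 1), 1 := by
        apply Finset.sum_le_sum
        intro j hj
        rw [Finset.mem_Icc] at hj
        rw [norm_mul, norm_eAdd, mul_one, norm_div]
        have h1 : ‖(((L : ℤ) - |j| : ℤ) : ℂ)‖ = |(((L : ℤ) - |j| : ℤ) : ℝ)| := by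
          rw [show ((((L : ℤ) - |j| : ℤ)) : ℂ) = ((((L : ℤ) - |j| : ℤ) : ℝ) : ℂ) from by norm_cast]
          rw [Complex.norm_real, Real.norm_eq_abs]
        have h2 : ‖((L : ℕ) : ℂ)‖ = (L : ℝ) := by
          rw [Complex.norm_natCast]
        rw [h1, h2]
        have hj2 : |((L : ℤ) - |j| : ℤ)| ≤ (L : ℤ) := by
          rcases le_or_gt 0 j with h | h
          · rw [abs_of_nonneg h] at *; rw [abs_of_nonneg (by omega)]; omega
          · rw [abs_of_neg h] at *; rw [abs_of_nonneg (by omega)]; omega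
        rw [div_le_one (by exact_mod_cast hL)]
        rw [← Int.cast_abs]
        exact_mod_cast hj2
    _ ≤ 2 * L := by
        rw [Finset.sum_const, nsmul_eq_mul, mul_one]
        have : (Finset.Icc (1 - (L : ℤ)) ((L : ℤ) - 1)).card = 2 * L - 1 := by
          rw [Int.card_Icc]
          omega
        rw [this]
        have : (2 * L - 1 : ℕ) ≤ 2 * L := by omega
        exact_mod_cast this

lemma norm_Dker_off (L : ℕ) (hL : 0 < L) (θ : ℝ) (hθ : θ - round θ ≠ 0) :
    ‖Dker L θ‖ ≤ 1 / (4 * L * (θ - round θ) ^ 2) := by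
  set t : ℝ := θ - round θ with ht
  have htpos : 0 < |t| := abs_pos.mpr hθ
  have hlow : 4 * |t| ≤ ‖eAdd θ - 1‖ := four_mul_le_norm_eAdd_sub_one θ
  have hne : eAdd θ ≠ 1 := by
    intro h
    rw [h, sub_self, norm_zero] at hlow
    linarith
  have hF := norm_geom_sum_le L θ hne
  have hFt : ‖∑ u ∈ range L, eAdd ((u : ℝ) * θ)‖ ≤ 1 / (2 * |t|) := by
    calc ‖∑ u ∈ range L, eAdd ((u : ℝ) * θ)‖ ≤ 2 / ‖eAdd θ - 1‖ := hF
      _ ≤ 2 / (4 * |t|) := by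
          apply div_le_div_of_nonneg_left (by norm_num) (by linarith) hlow
      _ = 1 / (2 * |t|) := by ring
  have hD : ‖Dker L θ‖ = ‖∑ u ∈ range L, eAdd ((u : ℝ) * θ)‖ ^ 2 / L := by
    have := Dker_mul_L L hL θ
    have hnorm : ‖(L : ℂ) * Dker L θ‖ = ‖∑ u ∈ range L, eAdd ((u : ℝ) * θ)‖ ^ 2 := by
      rw [this, norm_mul, RCLike.norm_conj, sq]
    rw [norm_mul] at hnorm
    have hLn : ‖((L : ℕ) : ℂ)‖ = (L : ℝ) := by rw [Complex.norm_natCast]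
    rw [hLn] at hnorm
    have hLpos : (0:ℝ) < L := by exact_mod_cast hL
    rw [eq_div_iff hLpos.ne']
    linear_combination hnorm
  rw [hD]
  rw [div_le_div_iff₀ (by positivity) (by positivity)]
  have h2 : ‖∑ u ∈ range L, eAdd ((u : ℝ) * θ)‖ ^ 2 ≤ (1 / (2 * |t|)) ^ 2 := by
    apply sq_le_sq' _ hFt
    have := norm_nonneg (∑ u ∈ range L, eAdd ((u : ℝ) * θ))
    nlinarith
  have h3 : (1 / (2 * |t|)) ^ 2 = 1 / (4 * t ^ 2) := by
    rw [div_pow, one_pow, mul_pow, sq_abs]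
    norm_num
  have hLpos : (0:ℝ) < L := by exact_mod_cast hL
  have h4 : ‖∑ u ∈ range L, eAdd ((u : ℝ) * θ)‖ ^ 2 ≤ 1 / (4 * t ^ 2) := by
    rw [← h3]; exact h2
  have ht2 : (0:ℝ) < t ^ 2 := by positivity
  calc ‖∑ u ∈ range L, eAdd ((u : ℝ) * θ)‖ ^ 2 * (4 * (L:ℝ) * t ^ 2)
      ≤ (1 / (4 * t ^ 2)) * (4 * (L:ℝ) * t ^ 2) := by
        apply mul_le_mul_of_nonneg_right h4 (by positivity)
    _ = 1 * (L:ℝ) := by field_simp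
    _ = 1 * (L:ℝ) := by ring

lemma norm_Dker_neg (L : ℕ) (θ : ℝ) : ‖Dker L (-θ)‖ = ‖Dker L θ‖ := by
  have : Dker L (-θ) = (starRingEnd ℂ) (Dker L θ) := by
    rw [Dker, Dker, map_sum]
    apply Finset.sum_congr rfl
    intro j _
    rw [map_mul, conj_eAdd]
    congr 1
    · rw [map_div₀]
      congr 1
      · exact (map_intCast (starRingEnd ℂ) _).symm
      · exact (map_natCast (starRingEnd ℂ) _).symm
    · congr 1
      ring
  rw [this, RCLike.norm_conj]

lemma large_sieve_general {ι : Type*} [DecidableEq ι] (S : Finset ι) (x : ι → ℝ)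
    (δ : ℝ) (hδ : 0 < δ)
    (hsep : ∀ p ∈ S, ∀ q ∈ S, p ≠ q → ∀ m : ℤ, δ ≤ |x p - x q - m|)
    (N L : ℕ) (hN : 1 ≤ N) (hNL : N ≤ L) (α : ℕ → ℂ) :
    ∑ p ∈ S, ‖∑ n ∈ Icc 1 N, α n * eAdd ((n : ℝ) * x p)‖ ^ 2 ≤
      (4 * L + 2 / (L * δ ^ 2)) * ∑ n ∈ Icc 1 N, ‖α n‖ ^ 2 := by
  classical
  have hL : 0 < L := lt_of_lt_of_le hN hNL
  have hLR : (0:ℝ) < L := by exact_mod_cast hL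
  set T : ι → ℂ := fun p => ∑ n ∈ Icc 1 N, α n * eAdd ((n : ℝ) * x p) with hT
  set β : ι → ℂ := fun p => (starRingEnd ℂ) (T p) with hβ
  set G : ℤ → ℂ := fun m => ∑ p ∈ S, β p * eAdd ((m : ℝ) * x p) with hG
  set S2 : ℝ := ∑ p ∈ S, ‖T p‖ ^ 2 with hS2
  set Z : ℝ := ∑ n ∈ Icc 1 N, ‖α n‖ ^ 2 with hZ
  have hS2nn : 0 ≤ S2 := Finset.sum_nonneg fun p _ => by positivity
  have hZnn : 0 ≤ Z := Finset.sum_nonneg fun n _ => by positivity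
  set Lam : ℝ := 4 * L + 2 / (L * δ ^ 2) with hLam
  have hLamnn : 0 ≤ Lam := by positivity
  -- Step A: duality identity
  have stepA : (S2 : ℂ) = ∑ n ∈ Icc 1 N, α n * G (n : ℤ) := by
    have h1 : (S2 : ℂ) = ∑ p ∈ S, β p * T p := by
      rw [hS2, Complex.ofReal_sum]
      apply Finset.sum_congr rfl
      intro p _
      rw [hβ]
      dsimp only
      rw [mul_comm, Complex.mul_conj, Complex.normSq_eq_norm_sq]
    rw [h1]
    have h2 : ∀ p ∈ S, β p * T p = ∑ n ∈ Icc 1 N, α n * (β p * eAdd ((n : ℝ) * x p)) := by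
      intro p _
      rw [hT]
      dsimp only
      rw [Finset.mul_sum]
      apply Finset.sum_congr rfl
      intro n _
      ring
    rw [Finset.sum_congr rfl h2, Finset.sum_comm]
    apply Finset.sum_congr rfl
    intro n _
    rw [hG]
    dsimp only
    rw [Finset.mul_sum]
    apply Finset.sum_congr rfl
    intro p _
    norm_num
  -- Step B: Cauchy-Schwarz
  have stepB : S2 ≤ Real.sqrt Z * Real.sqrt (∑ n ∈ Icc 1 N, ‖G (n : ℤ)‖ ^ 2) := by
    have h1 : S2 = ‖(S2 : ℂ)‖ := by
      rw [Complex.norm_real, Real.norm_eq_abs, abs_of_nonneg hS2nn]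
    rw [h1, stepA]
    calc ‖∑ n ∈ Icc 1 N, α n * G (n : ℤ)‖ ≤ ∑ n ∈ Icc 1 N, ‖α n * G (n : ℤ)‖ :=
          norm_sum_le _ _
      _ = ∑ n ∈ Icc 1 N, ‖α n‖ * ‖G (n : ℤ)‖ := by
          apply Finset.sum_congr rfl; intro n _; rw [norm_mul]
      _ ≤ Real.sqrt Z * Real.sqrt (∑ n ∈ Icc 1 N, ‖G (n : ℤ)‖ ^ 2) := by
          have hcs := Finset.sum_mul_sq_le_sq_mul_sq (Icc 1 N) (fun n => ‖α n‖)
            (fun n => ‖G (n : ℤ)‖)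
          have hnn : (0:ℝ) ≤ ∑ n ∈ Icc 1 N, ‖α n‖ * ‖G (n : ℤ)‖ :=
            Finset.sum_nonneg fun n _ => by positivity
          have h3 : ∑ n ∈ Icc 1 N, ‖α n‖ * ‖G (n : ℤ)‖
              = Real.sqrt ((∑ n ∈ Icc 1 N, ‖α n‖ * ‖G (n : ℤ)‖) ^ 2) := by
            rw [Real.sqrt_sq hnn]
          rw [h3, ← Real.sqrt_mul hZnn]
          apply Real.sqrt_le_sqrt
          exact hcs
  -- Step C: the kernel bound
  have stepC : ∑ n ∈ Icc 1 N, ‖G (n : ℤ)‖ ^ 2 ≤ Lam * S2 := by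
    set n0 : ℕ := (L + 1) / 2 with hn0
    have hn0ge1 : 1 ≤ n0 := by omega
    have hn0le : n0 ≤ L := by omega
    set c : ℤ → ℝ := fun j => (((L : ℤ) - |j| : ℤ) : ℝ) / L with hc
    set W := Finset.Icc (1 - (L : ℤ)) ((L : ℤ) - 1) with hWdef
    have hcW : ∀ j ∈ W, 0 ≤ c j := by
      intro j hj
      rw [hWdef, Finset.mem_Icc] at hj
      rw [hc]
      dsimp only
      apply div_nonneg _ hLR.le
      have : (0 : ℤ) ≤ (L : ℤ) - |j| := by
        have habs : |j| ≤ (L : ℤ) - 1 := abs_le.mpr ⟨by omega, by omega⟩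
        omega
      exact_mod_cast this
    -- C1 : window majorization
    have hC1 : ∑ n ∈ Icc 1 N, ‖G (n : ℤ)‖ ^ 2 ≤ ∑ j ∈ W, 2 * c j * ‖G ((n0 : ℤ) + j)‖ ^ 2 := by
      set V := Finset.Icc (1 - (n0 : ℤ)) ((N : ℤ) - n0) with hVdef
      have himg : ∑ n ∈ Icc 1 N, ‖G (n : ℤ)‖ ^ 2 = ∑ j ∈ V, ‖G ((n0 : ℤ) + j)‖ ^ 2 := by
        refine Finset.sum_nbij' (fun n => (n : ℤ) - n0) (fun j => (j + n0).toNat) ?_ ?_ ?_ ?_ ?_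
        · intro a ha
          rw [Finset.mem_Icc] at ha
          rw [hVdef, Finset.mem_Icc]
          omega
        · intro j hj
          rw [hVdef, Finset.mem_Icc] at hj
          rw [Finset.mem_Icc]
          omega
        · intro a ha; rw [Finset.mem_Icc] at ha; omega
        · intro j hj; rw [hVdef, Finset.mem_Icc] at hj; omega
        · intro a ha
          congr 2
          ring
      rw [himg]
      have hsub : V ⊆ W := by
        intro j hj
        rw [hVdef, Finset.mem_Icc] at hj
        rw [hWdef, Finset.mem_Icc]
        omega
      calc ∑ j ∈ V, ‖G ((n0 : ℤ) + j)‖ ^ 2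
          ≤ ∑ j ∈ V, 2 * c j * ‖G ((n0 : ℤ) + j)‖ ^ 2 := by
            apply Finset.sum_le_sum
            intro j hj
            rw [hVdef, Finset.mem_Icc] at hj
            have habs : 2 * |j| ≤ (L : ℤ) := by
              rcases le_or_gt 0 j with h | h
              · rw [abs_of_nonneg h]; omega
              · rw [abs_of_neg h]; omega
            have h1 : 1 ≤ 2 * c j := by
              rw [hc]
              dsimp only
              rw [mul_div_assoc', le_div_iff₀ hLR, one_mul]
              have h2 : (L : ℝ) ≤ 2 * (((L : ℤ) - |j| : ℤ) : ℝ) := by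
                have h3 : (L : ℤ) ≤ 2 * ((L : ℤ) - |j|) := by linarith
                exact_mod_cast h3
              linarith
            nlinarith [sq_nonneg ‖G ((n0 : ℤ) + j)‖, norm_nonneg (G ((n0 : ℤ) + j))]
        _ ≤ ∑ j ∈ W, 2 * c j * ‖G ((n0 : ℤ) + j)‖ ^ 2 := by
            apply Finset.sum_le_sum_of_subset_of_nonneg hsub
            intro j hj _
            have := hcW j hj
            positivity
    -- expansion of ‖G m‖²
    have hGsq : ∀ m : ℤ, ((‖G m‖ ^ 2 : ℝ) : ℂ)
        = ∑ p ∈ S, ∑ q ∈ S, (β p * (starRingEnd ℂ) (β q)) * eAdd ((m : ℝ) * (x p - x q)) := by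
      intro m
      have h1 : ((‖G m‖ ^ 2 : ℝ) : ℂ) = G m * (starRingEnd ℂ) (G m) := by
        rw [Complex.mul_conj, Complex.normSq_eq_norm_sq]
      rw [h1]
      rw [hG]
      dsimp only
      rw [map_sum, Finset.sum_mul_sum]
      apply Finset.sum_congr rfl
      intro p _
      apply Finset.sum_congr rfl
      intro q _
      rw [map_mul, conj_eAdd, mul_mul_mul_comm]
      congr 1
      rw [← eAdd_add]
      congr 1
      ring
    -- C2 : kernel representation
    set Wsum : ℝ := ∑ j ∈ W, c j * ‖G ((n0 : ℤ) + j)‖ ^ 2 with hWsum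
    have hWnn : 0 ≤ Wsum := Finset.sum_nonneg fun j hj => mul_nonneg (hcW j hj) (by positivity)
    have hcc : ∀ j : ℤ, ((c j : ℝ) : ℂ) = (((L : ℤ) - |j| : ℤ) : ℂ) / (L : ℂ) := by
      intro j
      rw [hc]
      dsimp only
      rw [Complex.ofReal_div]
      norm_cast
    have hC2 : ((Wsum : ℝ) : ℂ)
        = ∑ p ∈ S, ∑ q ∈ S, (β p * (starRingEnd ℂ) (β q)) *
            (eAdd ((n0 : ℝ) * (x p - x q)) * Dker L (x p - x q)) := by
      rw [hWsum, Complex.ofReal_sum]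
      have h1 : ∀ j ∈ W, ((c j * ‖G ((n0 : ℤ) + j)‖ ^ 2 : ℝ) : ℂ)
          = ∑ p ∈ S, ∑ q ∈ S, (β p * (starRingEnd ℂ) (β q)) *
              ((eAdd ((n0 : ℝ) * (x p - x q))) * (((c j : ℝ) : ℂ) * eAdd ((j : ℝ) * (x p - x q)))) := by
        intro j _
        rw [Complex.ofReal_mul, hGsq ((n0 : ℤ) + j)]
        rw [Finset.mul_sum]
        apply Finset.sum_congr rfl
        intro p _
        rw [Finset.mul_sum]
        apply Finset.sum_congr rfl
        intro q _
        have he : eAdd ((((n0 : ℤ) + j : ℤ) : ℝ) * (x p - x q))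
            = eAdd ((n0 : ℝ) * (x p - x q)) * eAdd ((j : ℝ) * (x p - x q)) := by
          rw [← eAdd_add]
          congr 1
          push_cast
          ring
        rw [he]
        ring
      rw [Finset.sum_congr rfl h1, Finset.sum_comm]
      apply Finset.sum_congr rfl
      intro p _
      rw [Finset.sum_comm]
      apply Finset.sum_congr rfl
      intro q _
      rw [Dker, Finset.mul_sum, Finset.mul_sum]
      apply Finset.sum_congr rfl
      intro j _
      rw [hcc j]
    -- C3 : norm bound
    have hDsym : ∀ p q : ι, ‖Dker L (x q - x p)‖ = ‖Dker L (x p - x q)‖ := by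
      intro p q
      rw [show x q - x p = -(x p - x q) from by ring, norm_Dker_neg]
    have hC3 : Wsum ≤ ∑ p ∈ S, ‖β p‖ ^ 2 * (2 * L + 1 / (L * δ ^ 2)) := by
      have h0 : Wsum = ‖((Wsum : ℝ) : ℂ)‖ := by
        rw [Complex.norm_real, Real.norm_eq_abs, abs_of_nonneg hWnn]
      have h1 : Wsum ≤ ∑ p ∈ S, ∑ q ∈ S, ‖β p‖ * ‖β q‖ * ‖Dker L (x p - x q)‖ := by
        rw [h0, hC2]
        calc ‖∑ p ∈ S, ∑ q ∈ S, (β p * (starRingEnd ℂ) (β q)) *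
              (eAdd ((n0 : ℝ) * (x p - x q)) * Dker L (x p - x q))‖
            ≤ ∑ p ∈ S, ‖∑ q ∈ S, (β p * (starRingEnd ℂ) (β q)) *
              (eAdd ((n0 : ℝ) * (x p - x q)) * Dker L (x p - x q))‖ := norm_sum_le _ _
          _ ≤ ∑ p ∈ S, ∑ q ∈ S, ‖(β p * (starRingEnd ℂ) (β q)) *
              (eAdd ((n0 : ℝ) * (x p - x q)) * Dker L (x p - x q))‖ :=
              Finset.sum_le_sum fun p _ => norm_sum_le _ _
          _ = ∑ p ∈ S, ∑ q ∈ S, ‖β p‖ * ‖β q‖ * ‖Dker L (x p - x q)‖ := by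
              apply Finset.sum_congr rfl
              intro p _
              apply Finset.sum_congr rfl
              intro q _
              simp only [hβ, norm_mul, norm_eAdd, one_mul, RCLike.norm_conj]
      have h2 : ∑ p ∈ S, ∑ q ∈ S, ‖β p‖ * ‖β q‖ * ‖Dker L (x p - x q)‖
          ≤ ∑ p ∈ S, ∑ q ∈ S, ‖β p‖ ^ 2 * ‖Dker L (x p - x q)‖ := by
        have hA : ∑ p ∈ S, ∑ q ∈ S, ‖β p‖ * ‖β q‖ * ‖Dker L (x p - x q)‖
            ≤ ∑ p ∈ S, ∑ q ∈ S, (‖β p‖ ^ 2 + ‖β q‖ ^ 2) / 2 * ‖Dker L (x p - x q)‖ := by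
          apply Finset.sum_le_sum
          intro p _
          apply Finset.sum_le_sum
          intro q _
          have hD0 : 0 ≤ ‖Dker L (x p - x q)‖ := norm_nonneg _
          nlinarith [sq_nonneg (‖β p‖ - ‖β q‖)]
        have hB : ∑ p ∈ S, ∑ q ∈ S, (‖β p‖ ^ 2 + ‖β q‖ ^ 2) / 2 * ‖Dker L (x p - x q)‖
            = ∑ p ∈ S, ∑ q ∈ S, ‖β p‖ ^ 2 * ‖Dker L (x p - x q)‖ := by
          have hsplit : ∀ p q : ι, (‖β p‖ ^ 2 + ‖β q‖ ^ 2) / 2 * ‖Dker L (x p - x q)‖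
              = (‖β p‖ ^ 2 * ‖Dker L (x p - x q)‖) / 2
                + (‖β q‖ ^ 2 * ‖Dker L (x p - x q)‖) / 2 := by
            intro p q
            ring
          simp_rw [hsplit, Finset.sum_add_distrib]
          have hswap : ∑ p ∈ S, ∑ q ∈ S, (‖β q‖ ^ 2 * ‖Dker L (x p - x q)‖) / 2
              = ∑ p ∈ S, ∑ q ∈ S, (‖β p‖ ^ 2 * ‖Dker L (x p - x q)‖) / 2 := by
            rw [Finset.sum_comm]
            apply Finset.sum_congr rfl
            intro p _
            apply Finset.sum_congr rfl
            intro q _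
            rw [hDsym p q]
          rw [hswap]
          ring_nf
          rw [Finset.sum_mul]
          apply Finset.sum_congr rfl
          intro p _
          rw [Finset.sum_mul]
          apply Finset.sum_congr rfl
          intro q _
          ring
        calc ∑ p ∈ S, ∑ q ∈ S, ‖β p‖ * ‖β q‖ * ‖Dker L (x p - x q)‖
            ≤ ∑ p ∈ S, ∑ q ∈ S, (‖β p‖ ^ 2 + ‖β q‖ ^ 2) / 2 * ‖Dker L (x p - x q)‖ := hA
          _ = ∑ p ∈ S, ∑ q ∈ S, ‖β p‖ ^ 2 * ‖Dker L (x p - x q)‖ := hB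
      have h3 : ∀ p ∈ S, ∑ q ∈ S, ‖Dker L (x p - x q)‖ ≤ 2 * L + 1 / (L * δ ^ 2) := by
        intro p hp
        rw [← Finset.add_sum_erase _ _ hp]
        have hdiag : ‖Dker L (x p - x p)‖ ≤ 2 * L := by
          rw [sub_self]
          exact norm_Dker_le L hL 0
        have hoff : ∑ q ∈ S.erase p, ‖Dker L (x p - x q)‖ ≤ 1 / (L * δ ^ 2) := by
          set v : ι → ℝ := fun q => (x p - x q) - round (x p - x q) with hv
          have hv1 : ∀ q ∈ S.erase p, δ ≤ |v q| := by
            intro q hq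
            rw [Finset.mem_erase] at hq
            exact hsep p hp q hq.2 (Ne.symm hq.1) (round (x p - x q))
          have hv2 : ∀ q ∈ S.erase p, ∀ r ∈ S.erase p, q ≠ r → δ ≤ |v q - v r| := by
            intro q hq r hr hqr
            rw [Finset.mem_erase] at hq hr
            have := hsep r hr.2 q hq.2 (Ne.symm hqr) (round (x p - x q) - round (x p - x r))
            have heq : v q - v r = x r - x q - ((round (x p - x q) : ℤ) - round (x p - x r)) := by
              rw [hv]
              dsimp only
              push_cast
              ring
            rw [heq]
            exact_mod_cast this
          have hterm : ∀ q ∈ S.erase p, ‖Dker L (x p - x q)‖ ≤ (1 / (4 * L)) * (1 / (v q) ^ 2) := by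
            intro q hq
            have hvne : v q ≠ 0 := by
              intro h
              have := hv1 q hq
              rw [h, abs_zero] at this
              linarith
            have := norm_Dker_off L hL (x p - x q) hvne
            calc ‖Dker L (x p - x q)‖ ≤ 1 / (4 * L * (v q) ^ 2) := this
              _ = (1 / (4 * L)) * (1 / (v q) ^ 2) := by
                  rw [← one_div_mul_one_div]
          calc ∑ q ∈ S.erase p, ‖Dker L (x p - x q)‖
              ≤ ∑ q ∈ S.erase p, (1 / (4 * L)) * (1 / (v q) ^ 2) :=
                Finset.sum_le_sum hterm
            _ = (1 / (4 * L)) * ∑ q ∈ S.erase p, 1 / (v q) ^ 2 := by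
                rw [Finset.mul_sum]
            _ ≤ (1 / (4 * L)) * (4 / δ ^ 2) := by
                apply mul_le_mul_of_nonneg_left _ (by positivity)
                exact packing_sum (S.erase p) v δ hδ hv1 hv2
            _ = 1 / (L * δ ^ 2) := by
                field_simp
        linarith
      calc Wsum ≤ ∑ p ∈ S, ∑ q ∈ S, ‖β p‖ ^ 2 * ‖Dker L (x p - x q)‖ := le_trans h1 h2
        _ = ∑ p ∈ S, ‖β p‖ ^ 2 * ∑ q ∈ S, ‖Dker L (x p - x q)‖ := by
            apply Finset.sum_congr rfl
            intro p _
            rw [Finset.mul_sum]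
        _ ≤ ∑ p ∈ S, ‖β p‖ ^ 2 * (2 * L + 1 / (L * δ ^ 2)) := by
            apply Finset.sum_le_sum
            intro p hp
            exact mul_le_mul_of_nonneg_left (h3 p hp) (by positivity)
    -- conclude step C
    have hβT : ∀ p : ι, ‖β p‖ = ‖T p‖ := fun p => RCLike.norm_conj _
    calc ∑ n ∈ Icc 1 N, ‖G (n : ℤ)‖ ^ 2
        ≤ ∑ j ∈ W, 2 * c j * ‖G ((n0 : ℤ) + j)‖ ^ 2 := hC1
      _ = 2 * Wsum := by
          rw [hWsum, Finset.mul_sum]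
          apply Finset.sum_congr rfl
          intro j _
          ring
      _ ≤ 2 * ∑ p ∈ S, ‖β p‖ ^ 2 * (2 * L + 1 / (L * δ ^ 2)) := by linarith [hC3]
      _ = Lam * S2 := by
          rw [hLam, hS2]
          rw [Finset.mul_sum, Finset.mul_sum]
          apply Finset.sum_congr rfl
          intro p _
          rw [hβT p]
          field_simp
          ring
  -- Step D: combine
  have hGnn : 0 ≤ ∑ n ∈ Icc 1 N, ‖G (n : ℤ)‖ ^ 2 := Finset.sum_nonneg fun n _ => by positivity
  rcases eq_or_lt_of_le hS2nn with h0 | hpos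
  · rw [← h0]
    exact mul_nonneg hLamnn hZnn
  · have hsq : S2 ^ 2 ≤ Z * (Lam * S2) := by
      calc S2 ^ 2 ≤ (Real.sqrt Z * Real.sqrt (∑ n ∈ Icc 1 N, ‖G (n : ℤ)‖ ^ 2)) ^ 2 :=
            pow_le_pow_left₀ hS2nn stepB 2
        _ = Z * (∑ n ∈ Icc 1 N, ‖G (n : ℤ)‖ ^ 2) := by
            rw [mul_pow, Real.sq_sqrt hZnn, Real.sq_sqrt hGnn]
        _ ≤ Z * (Lam * S2) := by
            apply mul_le_mul_of_nonneg_left stepC hZnn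
    have : S2 * S2 ≤ (Lam * Z) * S2 := by nlinarith [hsq]
    have hfin : S2 ≤ Lam * Z := le_of_mul_le_mul_right this hpos
    exact hfin

theorem classical_large_sieve_quadratic_moduli :
    ∃ C : ℝ, ∀ q R N : ℕ, ∀ α : ℕ → ℂ,
      IsPrimePow q → 0 < R → (2 * R : ℝ) < 2 * Real.sqrt q → 1 ≤ N →
      ∑ t ∈ Finset.Ioc R (2 * R),
          ∑ a ∈ (Finset.Icc 1 (Del q t)).filter (fun a => Nat.gcd a (Del q t) = 1),
            ‖∑ n ∈ Finset.Icc 1 N, α n * eAdd (n * ((a : ℝ) / (Del q t)))‖ ^ 2 ≤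
        C * ((q ^ 2 + N : ℕ) : ℝ) * (∑ n ∈ Finset.Icc 1 N, ‖α n‖ ^ 2) := by
  classical
  use 96
  intro q R N α hq hR hRq hN
  have hq0 : 0 < q := hq.pos
  have hq0R : (0:ℝ) < q := by exact_mod_cast hq0
  -- (2R)^2 < 4q
  have h4q : (2 * R) ^ 2 < 4 * q := by
    have h1 : ((2 * R : ℕ) : ℝ) ^ 2 < (2 * Real.sqrt q) ^ 2 := by
      apply sq_lt_sq' _ (by push_cast; exact hRq)
      have : (0:ℝ) ≤ ((2 * R : ℕ) : ℝ) := by positivity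
      nlinarith [Real.sqrt_nonneg (q : ℝ)]
    rw [mul_pow, Real.sq_sqrt hq0R.le] at h1
    have h2 : (((2 * R) ^ 2 : ℕ) : ℝ) < ((4 * q : ℕ) : ℝ) := by push_cast; push_cast at h1; linarith
    exact_mod_cast h2
  -- facts about Del
  have hDelfacts : ∀ t, R < t → t ≤ 2 * R → t ^ 2 < 4 * q ∧ 1 ≤ Del q t ∧ Del q t ≤ 4 * q := by
    intro t _ ht2
    have hsq : t ^ 2 ≤ (2 * R) ^ 2 := Nat.pow_le_pow_left ht2 2
    have h1 : t ^ 2 < 4 * q := lt_of_le_of_lt hsq h4q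
    refine ⟨h1, ?_, ?_⟩ <;> rw [Del] <;> omega
  set Sig := (Finset.Ioc R (2 * R)).sigma
      (fun t => (Finset.Icc 1 (Del q t)).filter (fun a => Nat.gcd a (Del q t) = 1)) with hSig
  set xf : (Σ _ : ℕ, ℕ) → ℝ := fun p => (p.2 : ℝ) / (Del q p.1 : ℝ) with hxf
  set δ : ℝ := 1 / (16 * (q : ℝ) ^ 2) with hδdef
  have hδ : 0 < δ := by rw [hδdef]; positivity
  set L : ℕ := N + 16 * q ^ 2 with hL
  have hNL : N ≤ L := by omega
  have hLpos : 0 < L := by omega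
  -- separation
  have hsep : ∀ p ∈ Sig, ∀ p' ∈ Sig, p ≠ p' → ∀ m : ℤ, δ ≤ |xf p - xf p' - m| := by
    rintro ⟨t, a⟩ hp ⟨t', a'⟩ hp' hne m
    rw [hSig, Finset.mem_sigma, Finset.mem_filter, Finset.mem_Icc, Finset.mem_Ioc] at hp hp'
    dsimp only at hp hp'
    obtain ⟨⟨htlo, hthi⟩, ⟨ha1, ha2⟩, hgcd⟩ := hp
    obtain ⟨⟨htlo', hthi'⟩, ⟨ha1', ha2'⟩, hgcd'⟩ := hp'
    obtain ⟨ht2, hd1, hd4⟩ := hDelfacts t htlo hthi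
    obtain ⟨ht2', hd1', hd4'⟩ := hDelfacts t' htlo' hthi'
    set d := Del q t with hd
    set d' := Del q t' with hd'
    have hdR : (0:ℝ) < (d : ℝ) := by exact_mod_cast hd1
    have hdR' : (0:ℝ) < (d' : ℝ) := by exact_mod_cast hd1'
    set numer : ℤ := (a : ℤ) * d' - (a' : ℤ) * d - m * d * d' with hnum
    have hnne : numer ≠ 0 := by
      intro h0
      -- d ∣ d'
      have hdvd1 : (d : ℤ) ∣ (a : ℤ) * (d' : ℤ) := ⟨(a' : ℤ) + m * d', by linear_combination h0⟩
      have hcop1 : IsCoprime ((d : ℕ) : ℤ) ((a : ℕ) : ℤ) := by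
        rw [Int.isCoprime_iff_gcd_eq_one, Int.gcd_natCast_natCast]
        rw [Nat.gcd_comm]
        exact hgcd
      have hdd' : (d : ℤ) ∣ (d' : ℤ) := hcop1.dvd_of_dvd_mul_left hdvd1
      -- d' ∣ d
      have hdvd2 : (d' : ℤ) ∣ (a' : ℤ) * (d : ℤ) := ⟨(a : ℤ) - m * d, by linear_combination -h0⟩
      have hcop2 : IsCoprime ((d' : ℕ) : ℤ) ((a' : ℕ) : ℤ) := by
        rw [Int.isCoprime_iff_gcd_eq_one, Int.gcd_natCast_natCast]
        rw [Nat.gcd_comm]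
        exact hgcd'
      have hd'd : (d' : ℤ) ∣ (d : ℤ) := hcop2.dvd_of_dvd_mul_left hdvd2
      have hdeq : (d : ℤ) = (d' : ℤ) :=
        Int.dvd_antisymm (by positivity) (by positivity) hdd' hd'd
      have hdeqn : d = d' := by exact_mod_cast hdeq
      -- t = t'
      have hteq : t = t' := by
        have h1 : t ^ 2 = t' ^ 2 := by
          rw [hd, hd', Del, Del] at hdeqn
          omega
        exact Nat.pow_left_injective (by norm_num) h1
      -- a - a' = m * d
      have haa : (a : ℤ) - (a' : ℤ) = m * d := by
        have h1 : (d : ℤ) * ((a : ℤ) - (a' : ℤ) - m * d) = 0 := by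
          rw [hnum] at h0
          linear_combination h0 + ((a : ℤ) - m * (d : ℤ)) * hdeq
        rcases mul_eq_zero.mp h1 with h | h
        · have : (0:ℤ) < (d:ℤ) := by exact_mod_cast hd1
          exact absurd h this.ne' 
        · linarith
      have haI1 : (1 : ℤ) ≤ (a : ℤ) := by exact_mod_cast ha1
      have haI2 : (a : ℤ) ≤ (d : ℤ) := by exact_mod_cast ha2
      have haI1' : (1 : ℤ) ≤ (a' : ℤ) := by exact_mod_cast ha1'
      have haI2' : (a' : ℤ) ≤ (d : ℤ) := by
        rw [hdeq]
        exact_mod_cast ha2'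
      have hdI : (1 : ℤ) ≤ (d : ℤ) := by exact_mod_cast hd1
      have hm0 : m = 0 := by
        rcases lt_trichotomy m 0 with h | h | h
        · have hm1 : m ≤ -1 := by omega
          have h2 : m * (d : ℤ) ≤ -1 * (d : ℤ) :=
            mul_le_mul_of_nonneg_right hm1 (by linarith)
          linarith
        · exact h
        · have hm1 : (1 : ℤ) ≤ m := by omega
          have h2 : 1 * (d : ℤ) ≤ m * (d : ℤ) :=
            mul_le_mul_of_nonneg_right hm1 (by linarith)
          linarith
      have haeq : a = a' := by
        rw [hm0, zero_mul, sub_eq_zero] at haa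
        exact_mod_cast haa
      exact hne (by rw [hteq, haeq])
    have habs1 : (1 : ℤ) ≤ |numer| := Int.one_le_abs hnne
    have hxd : xf ⟨t, a⟩ - xf ⟨t', a'⟩ - m = (numer : ℝ) / ((d : ℝ) * (d' : ℝ)) := by
      rw [hxf, hnum]
      dsimp only
      rw [← hd, ← hd']
      field_simp
      push_cast
      ring
    rw [hxd, abs_div]
    have hdd16 : (d : ℝ) * (d' : ℝ) ≤ 16 * (q : ℝ) ^ 2 := by
      have h1 : d * d' ≤ (4 * q) * (4 * q) := Nat.mul_le_mul hd4 hd4'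
      have h2 : ((d * d' : ℕ) : ℝ) ≤ (((4 * q) * (4 * q) : ℕ) : ℝ) := by exact_mod_cast h1
      push_cast at h2
      nlinarith [h2]
    have habsdd : |(d : ℝ) * (d' : ℝ)| = (d : ℝ) * (d' : ℝ) := abs_of_pos (by positivity)
    rw [habsdd]
    have habsn : (1 : ℝ) ≤ |(numer : ℝ)| := by
      rw [← Int.cast_abs]
      exact_mod_cast habs1
    calc δ = 1 / (16 * (q : ℝ) ^ 2) := hδdef
      _ ≤ 1 / ((d : ℝ) * (d' : ℝ)) :=
          div_le_div_of_nonneg_left (by norm_num) (by positivity) hdd16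
      _ ≤ |(numer : ℝ)| / ((d : ℝ) * (d' : ℝ)) :=
          (div_le_div_iff_of_pos_right (by positivity)).mpr habsn
  -- rewrite double sum as a sigma sum
  have hsum : ∑ t ∈ Finset.Ioc R (2 * R),
      ∑ a ∈ (Finset.Icc 1 (Del q t)).filter (fun a => Nat.gcd a (Del q t) = 1),
        ‖∑ n ∈ Finset.Icc 1 N, α n * eAdd (n * ((a : ℝ) / (Del q t)))‖ ^ 2
      = ∑ p ∈ Sig, ‖∑ n ∈ Finset.Icc 1 N, α n * eAdd ((n : ℝ) * xf p)‖ ^ 2 := by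
    rw [hSig, Finset.sum_sigma]
  rw [hsum]
  have hmain := large_sieve_general Sig xf δ hδ hsep N L hN hNL α
  refine le_trans hmain ?_
  have hZnn : 0 ≤ ∑ n ∈ Finset.Icc 1 N, ‖α n‖ ^ 2 :=
    Finset.sum_nonneg fun n _ => by positivity
  have hq1 : (1:ℝ) ≤ (q:ℝ) := by exact_mod_cast hq0
  have hLRpos : (0:ℝ) < (L:ℝ) := by exact_mod_cast hLpos
  have hLcast : (L:ℝ) = (N:ℝ) + 16 * (q:ℝ)^2 := by rw [hL]; push_cast; ring
  have hkey : 4 * (L:ℝ) + 2 / ((L:ℝ) * δ ^ 2) ≤ 96 * ((q ^ 2 + N : ℕ) : ℝ) := by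
    have hNpos : (0:ℝ) ≤ (N:ℝ) := Nat.cast_nonneg N
    have hδ2 : δ ^ 2 = 1 / (256 * (q:ℝ)^4) := by
      rw [hδdef, div_pow, one_pow]
      congr 1
      ring
    have h1 : (L:ℝ) * δ ^ 2 = ((N:ℝ) + 16*(q:ℝ)^2) / (256 * (q:ℝ)^4) := by
      rw [hδ2, hLcast, mul_one_div]
    have h2 : 2 / ((L:ℝ) * δ^2) = 512 * (q:ℝ)^4 / ((N:ℝ) + 16*(q:ℝ)^2) := by
      rw [h1, div_div_eq_mul_div]
      ring
    have h3 : 512 * (q:ℝ)^4 / ((N:ℝ) + 16*(q:ℝ)^2) ≤ 32 * (q:ℝ)^2 := by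
      rw [div_le_iff₀ (by positivity)]
      have h30 : (0:ℝ) ≤ 32*(q:ℝ)^2*(N:ℝ) := by positivity
      have hexp : 32*(q:ℝ)^2*((N:ℝ) + 16*(q:ℝ)^2) = 32*(q:ℝ)^2*(N:ℝ) + 512*(q:ℝ)^4 := by ring
      linarith
    have hcast : ((q ^ 2 + N : ℕ) : ℝ) = (q:ℝ)^2 + (N:ℝ) := by push_cast; ring
    rw [hcast, h2, hLcast]
    linarith [h3, sq_nonneg (q:ℝ)]
  calc (4 * (L:ℝ) + 2 / ((L:ℝ) * δ ^ 2)) * ∑ n ∈ Finset.Icc 1 N, ‖α n‖ ^ 2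
      ≤ (96 * ((q ^ 2 + N : ℕ) : ℝ)) * ∑ n ∈ Finset.Icc 1 N, ‖α n‖ ^ 2 :=
        mul_le_mul_of_nonneg_right hkey hZnn
    _ = 96 * ((q ^ 2 + N : ℕ) : ℝ) * ∑ n ∈ Finset.Icc 1 N, ‖α n‖ ^ 2 := by ring
end
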